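/- For a proper subdomain G of R^n, p ≥ 1, and points z1, z2 ∈ G: |z1-z2| / ( |z1-z2| + 2 min{d_G(z1), d_G(z2)} ) ≤ b_{G,p}(z1,z2) ≤ |z1-z2| / ( d_G(z1)^p + d_G(z2)^p )^{1/p}, where d_G(z) = dist(z, ∂G). -/
import Mathlib


open Set Metric

/-- Barrlund distance with parameter `p` in a domain `G`. -/
noncomputable def barrlund {n : ℕ} (G : Set (EuclideanSpace ℝ (Fin n))) (p : ℝ)
    (x y : EuclideanSpace ℝ (Fin n)) : ℝ :=
  sSup ((fun w => dist x y / (dist x w ^ p + dist w y ^ p) ^ (1 / p)) '' frontier G)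

lemma rpow_add_rpow_le_add_real {x y p : ℝ} (hx : 0 ≤ x) (hy : 0 ≤ y) (hp : 1 ≤ p) :
    (x ^ p + y ^ p) ^ (1 / p) ≤ x + y := by
  have h := NNReal.rpow_add_rpow_le_add x.toNNReal y.toNNReal hp
  have h' := NNReal.coe_le_coe.mpr h
  rwa [NNReal.coe_rpow, NNReal.coe_add, NNReal.coe_rpow, NNReal.coe_rpow,
    NNReal.coe_add, Real.coe_toNNReal x hx, Real.coe_toNNReal y hy] at h' 

theorem stmt18 {n : ℕ} (G : Set (EuclideanSpace ℝ (Fin n)))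
    (hG : IsOpen G) (hGc : IsConnected G) (hGne : G ≠ univ)
    (p : ℝ) (hp : 1 ≤ p) (z1 z2 : EuclideanSpace ℝ (Fin n)) (hz1 : z1 ∈ G) (hz2 : z2 ∈ G) :
    dist z1 z2 /
        (dist z1 z2 + 2 * min (infDist z1 (frontier G)) (infDist z2 (frontier G))) ≤
      barrlund G p z1 z2 ∧
    barrlund G p z1 z2 ≤
      dist z1 z2 / (infDist z1 (frontier G) ^ p + infDist z2 (frontier G) ^ p) ^ (1 / p) := by
  have hppos : 0 < p := lt_of_lt_of_le zero_lt_one hp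
  have hSne : (frontier G).Nonempty := by
    rw [nonempty_iff_ne_empty]
    intro h
    rcases frontier_eq_empty_iff.mp h with h1 | h1
    · exact (Nonempty.ne_empty ⟨z1, hz1⟩) h1
    · exact hGne h1
  have hScl : IsClosed (frontier G) := isClosed_frontier
  have hnm : ∀ z : EuclideanSpace ℝ (Fin n), z ∈ G → z ∉ frontier G := by
    intro z hz hzf
    rw [hG.frontier_eq] at hzf
    exact hzf.2 hz
  have hd1 : 0 < infDist z1 (frontier G) :=
    (hScl.notMem_iff_infDist_pos hSne).mp (hnm z1 hz1)
  have hd2 : 0 < infDist z2 (frontier G) :=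
    (hScl.notMem_iff_infDist_pos hSne).mp (hnm z2 hz2)
  set d1 := infDist z1 (frontier G)
  set d2 := infDist z2 (frontier G)
  -- every element of the image is ≤ upper bound
  have key : ∀ x ∈ (fun w => dist z1 z2 / (dist z1 w ^ p + dist w z2 ^ p) ^ (1 / p)) ''
      frontier G, x ≤ dist z1 z2 / (d1 ^ p + d2 ^ p) ^ (1 / p) := by
    rintro x ⟨w, hw, rfl⟩
    dsimp only
    have h1 : d1 ≤ dist z1 w := infDist_le_dist_of_mem hw
    have h2 : d2 ≤ dist w z2 := by rw [dist_comm]; exact infDist_le_dist_of_mem hw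
    gcongr
  have hbdd : BddAbove ((fun w => dist z1 z2 / (dist z1 w ^ p + dist w z2 ^ p) ^ (1 / p)) ''
      frontier G) := ⟨_, key⟩
  constructor
  · -- lower bound
    have main : ∀ (a b : EuclideanSpace ℝ (Fin n)), a ∈ G → b ∈ G →
        ∀ w ∈ frontier G, infDist a (frontier G) = dist a w →
        dist a b / (dist a b + 2 * infDist a (frontier G)) ≤
          dist a b / (dist a w ^ p + dist w b ^ p) ^ (1 / p) := by
      intro a b ha hb w hw hwd
      have hda : 0 < infDist a (frontier G) :=
        (hScl.notMem_iff_infDist_pos hSne).mp (hnm a ha)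
      have hwb : dist w b ≤ dist a b + infDist a (frontier G) := by
        calc dist w b ≤ dist w a + dist a b := dist_triangle w a b
          _ = dist a b + infDist a (frontier G) := by rw [dist_comm w a, ← hwd]; ring
      have hle : (dist a w ^ p + dist w b ^ p) ^ (1 / p) ≤
          dist a b + 2 * infDist a (frontier G) := by
        calc (dist a w ^ p + dist w b ^ p) ^ (1 / p)
            ≤ dist a w + dist w b := rpow_add_rpow_le_add_real dist_nonneg dist_nonneg hp
          _ ≤ infDist a (frontier G) + (dist a b + infDist a (frontier G)) := by
              rw [← hwd]; exact add_le_add le_rfl hwb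
          _ = dist a b + 2 * infDist a (frontier G) := by ring
      have hpos : (0:ℝ) < (dist a w ^ p + dist w b ^ p) ^ (1 / p) := by
        have : (0:ℝ) < dist a w := by rw [← hwd]; exact hda
        positivity
      gcongr
    rcases le_total d1 d2 with hmin | hmin
    · rw [min_eq_left hmin]
      obtain ⟨w, hw, hwd⟩ := hScl.exists_infDist_eq_dist hSne z1
      calc dist z1 z2 / (dist z1 z2 + 2 * d1)
          ≤ dist z1 z2 / (dist z1 w ^ p + dist w z2 ^ p) ^ (1 / p) :=
            main z1 z2 hz1 hz2 w hw hwd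
        _ ≤ barrlund G p z1 z2 := le_csSup hbdd ⟨w, hw, rfl⟩
    · rw [min_eq_right hmin]
      obtain ⟨w, hw, hwd⟩ := hScl.exists_infDist_eq_dist hSne z2
      have := main z2 z1 hz2 hz1 w hw hwd
      rw [dist_comm z2 z1] at this
      calc dist z1 z2 / (dist z1 z2 + 2 * d2)
          ≤ dist z1 z2 / (dist z2 w ^ p + dist w z1 ^ p) ^ (1 / p) := this
        _ = dist z1 z2 / (dist z1 w ^ p + dist w z2 ^ p) ^ (1 / p) := by
            rw [dist_comm z2 w, dist_comm w z1, add_comm]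
        _ ≤ barrlund G p z1 z2 := le_csSup hbdd ⟨w, hw, rfl⟩
  · -- upper bound
    apply Real.sSup_le key
    positivity
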